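/- Assume the 2n vectors δ_1(t),…,δ_n(t),δ_1'(t),…,δ_n'(t) are linearly independent for each t and δ_i·δ_j' ≡ 0 for all i,j. Then the n×n Gram matrix G(t) = (δ_i'(t)·δ_j'(t))_{i,j} is invertible for every t, and the curve σ(t) = γ(t) + Σ_{i=1}^n u_i(t)δ_i(t), where (u_1(t),…,u_n(t)) = −G(t)^{−1}(γ'(t)·δ_1'(t),…,γ'(t)·δ_n'(t)), is a striction curve: σ'(t)·δ_i'(t) = 0 for all t and all i = 1,…,n. -/

import Mathlib

open Filter Topology Matrix

noncomputable section

/-- The standard inner product on `ℝ^N`. -/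
def dp {N : ℕ} (v w : Fin N → ℝ) : ℝ := ∑ i, v i * w i

/-- The Gram matrix `G(t) = (δ_i'(t) · δ_j'(t))_{i,j}`. -/
def gram {n : ℕ} (δ : Fin n → ℝ → (Fin (2 * n) → ℝ)) (t : ℝ) : Matrix (Fin n) (Fin n) ℝ :=
  Matrix.of fun i j => dp (deriv (δ i) t) (deriv (δ j) t)

/-- `(u_1(t), …, u_n(t)) = - G(t)⁻¹ (γ'(t)·δ_1'(t), …, γ'(t)·δ_n'(t))`. -/
def strictU {n : ℕ} (γ : ℝ → (Fin (2 * n) → ℝ)) (δ : Fin n → ℝ → (Fin (2 * n) → ℝ))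
    (t : ℝ) : Fin n → ℝ :=
  -((gram δ t)⁻¹.mulVec (fun i => dp (deriv γ t) (deriv (δ i) t)))

/-- The curve `σ(t) = γ(t) + Σ_i u_i(t) δ_i(t)`. -/
def strictCurve {n : ℕ} (γ : ℝ → (Fin (2 * n) → ℝ)) (δ : Fin n → ℝ → (Fin (2 * n) → ℝ))
    (t : ℝ) : Fin (2 * n) → ℝ :=
  γ t + ∑ i, strictU γ δ t i • δ i t

/-- The one-parameter family of `n`-planes `F_{(γ,δ)}(t,u) = γ(t) + Σ_i u_i δ_i(t)`. -/
def ruled {n : ℕ} (γ : ℝ → (Fin (2 * n) → ℝ)) (δ : Fin n → ℝ → (Fin (2 * n) → ℝ)) :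
    ℝ × (Fin n → ℝ) → (Fin (2 * n) → ℝ) :=
  fun p => γ p.1 + ∑ i, p.2 i • δ i p.1

/-- `F_{(γ,δ)}` viewed as a map `ℝ^{n+1} → ℝ^{2n}`, `x = (t, u_1, …, u_n)`. -/
def ruledF {n : ℕ} (γ : ℝ → (Fin (2 * n) → ℝ)) (δ : Fin n → ℝ → (Fin (2 * n) → ℝ)) :
    (Fin (n + 1) → ℝ) → (Fin (2 * n) → ℝ) :=
  fun x => γ (x 0) + ∑ i, x i.succ • δ i (x 0)

/-- The point `(t₀, 0, …, 0) ∈ ℝ^{n+1}`. -/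
def bpt {n : ℕ} (t₀ : ℝ) : Fin (n + 1) → ℝ := fun k => if k = 0 then t₀ else 0

def xhat' {m : ℕ} (x : Fin m → ℝ) (q : ℕ) : ℝ := if h : q < m then x ⟨q, h⟩ else 0

/-- The `1`-Morin (Whitney-umbrella type) normal form
`(x_1, …, x_n, x_1x_{n+1}, …, x_{n-1}x_{n+1}, x_{n+1}²) : (ℝ^{n+1},0) → (ℝ^{2n},0)`. -/
def whitneyNF (n : ℕ) : (Fin (n + 1) → ℝ) → (Fin (2 * n) → ℝ) := fun x k =>
  if k.val < n then xhat' x k.val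
  else if k.val < 2 * n - 1 then xhat' x (k.val - n) * xhat' x n
  else (xhat' x n) ^ 2

/-- `δ_q(t)` with a `ℕ` index (`0` if out of range). -/
def dhat {n : ℕ} (δ : Fin n → ℝ → (Fin (2 * n) → ℝ)) (q : ℕ) (t : ℝ) : Fin (2 * n) → ℝ :=
  if h : q < n then δ ⟨q, h⟩ t else 0

/-- `δ_q'(t)` with a `ℕ` index (`0` if out of range). -/
def dphat {n : ℕ} (δ : Fin n → ℝ → (Fin (2 * n) → ℝ)) (q : ℕ) (t : ℝ) : Fin (2 * n) → ℝ :=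
  if h : q < n then deriv (δ ⟨q, h⟩) t else 0

/-- `λ_j(t,u) = det(γ'(t) + Σ_i u_iδ_i'(t), δ_1(t), …, δ_n(t),
δ_1'(t), …, δ_{j-1}'(t), δ_{j+1}'(t), …, δ_n'(t))` (here `j : Fin n` is `0`-indexed,
correspondig to the paper's `λ_{j+1}`); the entries of the matrix are listed as columns. -/
def lamRuled {n : ℕ} (γ : ℝ → (Fin (2 * n) → ℝ)) (δ : Fin n → ℝ → (Fin (2 * n) → ℝ))
    (j : Fin n) : ℝ × (Fin n → ℝ) → ℝ := fun p =>
  Matrix.det (Matrix.of fun (row col : Fin (2 * n)) =>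
    if col.val = 0 then (deriv γ p.1 + ∑ i, p.2 i • deriv (δ i) p.1) row
    else if col.val < n + 1 then dhat δ (col.val - 1) p.1 row
    else dphat δ
      (if col.val - (n + 1) < j.val then col.val - (n + 1) else col.val - (n + 1) + 1)
      p.1 row)

/-- `Δ(t) = det(δ_1(t), …, δ_n(t), δ_1'(t), …, δ_n'(t))` (columns). -/
def bigDelta {n : ℕ} (δ : Fin n → ℝ → (Fin (2 * n) → ℝ)) (t : ℝ) : ℝ :=
  Matrix.det (Matrix.of fun (row col : Fin (2 * n)) =>
    if col.val < n then dhat δ col.val t row else dphat δ (col.val - n) t row)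


section auxlemmas

lemma dp_comm {N : ℕ} (v w : Fin N → ℝ) : dp v w = dp w v := by
  simp [dp, mul_comm]

lemma dp_add_left {N : ℕ} (v v' w : Fin N → ℝ) : dp (v + v') w = dp v w + dp v' w := by
  simp [dp, add_mul, Finset.sum_add_distrib]

lemma dp_smul_left {N : ℕ} (c : ℝ) (v w : Fin N → ℝ) : dp (c • v) w = c * dp v w := by
  simp [dp, Finset.mul_sum, mul_assoc]

lemma dp_sum_left {N : ℕ} {α : Type*} (s : Finset α) (f : α → Fin N → ℝ) (w : Fin N → ℝ) :
    dp (∑ i ∈ s, f i) w = ∑ i ∈ s, dp (f i) w := by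
  simp only [dp, Finset.sum_apply, Finset.sum_mul]
  exact Finset.sum_comm

lemma det_diffAt {m : ℕ} {M : ℝ → Matrix (Fin m) (Fin m) ℝ} {t : ℝ}
    (h : ∀ i j, DifferentiableAt ℝ (fun s => M s i j) t) :
    DifferentiableAt ℝ (fun s => (M s).det) t := by
  simp only [Matrix.det_apply']
  exact DifferentiableAt.fun_sum fun σ _ =>
    (DifferentiableAt.fun_finsetProd (fun i _ => h (σ i) i)).const_mul _

lemma adjugate_diffAt {m : ℕ} {M : ℝ → Matrix (Fin m) (Fin m) ℝ} {t : ℝ}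
    (h : ∀ i j, DifferentiableAt ℝ (fun s => M s i j) t) (i j : Fin m) :
    DifferentiableAt ℝ (fun s => (M s).adjugate i j) t := by
  simp only [Matrix.adjugate_apply]
  apply det_diffAt
  intro a b
  simp only [Matrix.updateRow_apply]
  split_ifs
  · exact differentiableAt_const _
  · exact h a b

end auxlemmas

/-- Under the assumptions, the Gram matrix `G(t) = (δ_i'·δ_j')` is
invertible for every `t ∈ J`, and the curve
`σ(t) = γ(t) + Σ u_i(t)δ_i(t)` with `u(t) = -G(t)⁻¹(γ'·δ_1', …, γ'·δ_n')` is a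
striction curve: `σ'(t)·δ_i'(t) = 0` for all `t ∈ J` and all `i`. -/
theorem stmt10 {n : ℕ} (hn : 0 < n) (J : Set ℝ) (hJ : IsOpen J)
    (γ : ℝ → (Fin (2 * n) → ℝ)) (δ : Fin n → ℝ → (Fin (2 * n) → ℝ))
    (hγ : ContDiffOn ℝ (⊤ : ℕ∞) γ J) (hδ : ∀ i, ContDiffOn ℝ (⊤ : ℕ∞) (δ i) J)
    (horth : ∀ t ∈ J, ∀ i j, dp (δ i t) (δ j t) = if i = j then 1 else 0)
    (hperp : ∀ t ∈ J, ∀ i j, dp (δ i t) (deriv (δ j) t) = 0)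
    (hlin : ∀ t ∈ J,
      LinearIndependent ℝ (Sum.elim (fun i => δ i t) (fun i => deriv (δ i) t))) :
    (∀ t ∈ J, IsUnit (gram δ t)) ∧
      (∀ t ∈ J, ∀ i : Fin n, dp (deriv (strictCurve γ δ) t) (deriv (δ i) t) = 0) := by
  classical
  -- Part 1: the Gram matrix is invertible on J.
  have key1 : ∀ t ∈ J, IsUnit (gram δ t) := by
    intro t ht
    rw [Matrix.isUnit_iff_isUnit_det, isUnit_iff_ne_zero]
    intro hdet
    obtain ⟨c, hc0, hc⟩ := (Matrix.exists_mulVec_eq_zero_iff).2 hdet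
    set v : Fin n → Fin (2 * n) → ℝ := fun i => deriv (δ i) t with hv
    have hw : (∑ i, c i • v i) = 0 := by
      have h1 : dp (∑ i, c i • v i) (∑ i, c i • v i) = 0 := by
        rw [dp_sum_left]
        have : ∀ i, dp (c i • v i) (∑ j, c j • v j) = c i * ((gram δ t).mulVec c) i := by
          intro i
          rw [dp_smul_left, dp_comm, dp_sum_left]
          congr 1
          simp only [Matrix.mulVec, dotProduct, _root_.gram, Matrix.of_apply]
          refine Finset.sum_congr rfl fun j _ => ?_
          rw [dp_smul_left, dp_comm, mul_comm]
        rw [Finset.sum_congr rfl fun i _ => this i]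
        simp [hc]
      have h2 : ∀ k, (∑ i, c i • v i) k * (∑ i, c i • v i) k = 0 := by
        have := (Finset.sum_eq_zero_iff_of_nonneg
          (fun k _ => mul_self_nonneg ((∑ i, c i • v i) k))).1 h1
        intro k; exact this k (Finset.mem_univ k)
      funext k
      exact mul_self_eq_zero.1 (h2 k)
    apply hc0
    have hli := Fintype.linearIndependent_iff.1 (hlin t ht) (Sum.elim 0 c) ?_
    · funext i
      simpa using hli (Sum.inr i)
    · rw [Fintype.sum_sum_type]
      simpa using hw
  refine ⟨key1, ?_⟩
  -- Part 2
  intro t₀ ht₀ i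
  have hJt : J ∈ 𝓝 t₀ := hJ.mem_nhds ht₀
  -- differentiability facts
  have hγ1 : DifferentiableAt ℝ γ t₀ :=
    (hγ.contDiffAt hJt).differentiableAt (by simp)
  have hδ1 : ∀ p, DifferentiableAt ℝ (δ p) t₀ := fun p =>
    ((hδ p).contDiffAt hJt).differentiableAt (by simp)
  have hγ' : ContDiffOn ℝ (⊤ : ℕ∞) (deriv γ) J := by
    have := (contDiffOn_infty_iff_deriv_of_isOpen hJ).1 hγ
    exact this.2
  have hδ' : ∀ p, ContDiffOn ℝ (⊤ : ℕ∞) (deriv (δ p)) J := fun p =>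
    ((contDiffOn_infty_iff_deriv_of_isOpen hJ).1 (hδ p)).2
  have hγ'd : DifferentiableAt ℝ (deriv γ) t₀ :=
    (hγ'.contDiffAt hJt).differentiableAt (by simp)
  have hδ'd : ∀ p, DifferentiableAt ℝ (deriv (δ p)) t₀ := fun p =>
    ((hδ' p).contDiffAt hJt).differentiableAt (by simp)
  have hγ'k : ∀ k, DifferentiableAt ℝ (fun s => deriv γ s k) t₀ := fun k =>
    (differentiableAt_pi.1 hγ'd) k
  have hδ'k : ∀ p k, DifferentiableAt ℝ (fun s => deriv (δ p) s k) t₀ := fun p k =>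
    (differentiableAt_pi.1 (hδ'd p)) k
  have hGentry : ∀ p q, DifferentiableAt ℝ (fun s => gram δ s p q) t₀ := by
    intro p q
    simp only [_root_.gram, Matrix.of_apply, dp]
    exact DifferentiableAt.fun_sum fun k _ => (hδ'k p k).mul (hδ'k q k)
  have hdet : DifferentiableAt ℝ (fun s => (gram δ s).det) t₀ := det_diffAt hGentry
  have hdetne : (gram δ t₀).det ≠ 0 := by
    have := (Matrix.isUnit_iff_isUnit_det _).1 (key1 t₀ ht₀)
    exact this.ne_zero
  have hb : ∀ q, DifferentiableAt ℝ (fun s => dp (deriv γ s) (deriv (δ q) s)) t₀ := by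
    intro q
    simp only [dp]
    exact DifferentiableAt.fun_sum fun k _ => (hγ'k k).mul (hδ'k q k)
  have hrepr : ∀ s p, strictU γ δ s p =
      -(∑ q, (gram δ s).det⁻¹ * (gram δ s).adjugate p q * dp (deriv γ s) (deriv (δ q) s)) := by
    intro s p
    simp only [strictU, Pi.neg_apply, Matrix.inv_def, Ring.inverse_eq_inv',
      Matrix.mulVec, dotProduct, Matrix.smul_apply, smul_eq_mul]
  have hU : ∀ p, DifferentiableAt ℝ (fun s => strictU γ δ s p) t₀ := by
    intro p
    have : DifferentiableAt ℝ (fun s =>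
        -(∑ q, (gram δ s).det⁻¹ * (gram δ s).adjugate p q *
          dp (deriv γ s) (deriv (δ q) s))) t₀ := by
      apply DifferentiableAt.neg
      apply DifferentiableAt.fun_sum
      intro q _
      exact ((hdet.inv hdetne).mul (adjugate_diffAt hGentry p q)).mul (hb q)
    exact this.congr_of_eventuallyEq (Filter.Eventually.of_forall fun s => hrepr s p)
  -- the derivative of the striction curve
  have hσ : HasDerivAt (strictCurve γ δ)
      (deriv γ t₀ + ∑ p, (strictU γ δ t₀ p • deriv (δ p) t₀ +
        deriv (fun s => strictU γ δ s p) t₀ • δ p t₀)) t₀ := by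
    have h1 : HasDerivAt γ (deriv γ t₀) t₀ := hγ1.hasDerivAt
    have h2 : ∀ p : Fin n, HasDerivAt (fun s => strictU γ δ s p • δ p s)
        (strictU γ δ t₀ p • deriv (δ p) t₀ +
          deriv (fun s => strictU γ δ s p) t₀ • δ p t₀) t₀ :=
      fun p => ((hU p).hasDerivAt).smul ((hδ1 p).hasDerivAt)
    have h3 : HasDerivAt (fun s => ∑ p, strictU γ δ s p • δ p s)
        (∑ p, (strictU γ δ t₀ p • deriv (δ p) t₀ +
          deriv (fun s => strictU γ δ s p) t₀ • δ p t₀)) t₀ :=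
      HasDerivAt.fun_sum fun p _ => h2 p
    exact h1.add h3
  have hderiv := hσ.deriv
  rw [hderiv]
  -- expand the inner product
  rw [dp_add_left, dp_sum_left]
  have hterm : ∀ p : Fin n,
      dp (strictU γ δ t₀ p • deriv (δ p) t₀ +
        deriv (fun s => strictU γ δ s p) t₀ • δ p t₀) (deriv (δ i) t₀) =
      strictU γ δ t₀ p * gram δ t₀ p i := by
    intro p
    rw [dp_add_left, dp_smul_left, dp_smul_left, hperp t₀ ht₀ p i]
    simp [_root_.gram]
  rw [Finset.sum_congr rfl fun p _ => hterm p]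
  have hsum : ∑ p, strictU γ δ t₀ p * gram δ t₀ p i =
      ((gram δ t₀).mulVec (strictU γ δ t₀)) i := by
    simp only [Matrix.mulVec, dotProduct]
    refine Finset.sum_congr rfl fun p _ => ?_
    rw [mul_comm]
    congr 1
    simp only [_root_.gram, Matrix.of_apply]
    exact dp_comm _ _
  rw [hsum]
  have hGU : (gram δ t₀).mulVec (strictU γ δ t₀) =
      -(fun q => dp (deriv γ t₀) (deriv (δ q) t₀)) := by
    simp only [strictU, Matrix.mulVec_neg, Matrix.mulVec_mulVec,
      Matrix.mul_nonsing_inv _ ((Matrix.isUnit_iff_isUnit_det _).1 (key1 t₀ ht₀)),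
      Matrix.one_mulVec]
  rw [hGU]
  simp
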